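/- Let φ be 𝒯-good and I ∈ S_φ. Then A(φ,I) = I \ ⋃{J ∈ S_φ : J* = I} up to a null set, where J* is the smallest element of S_φ properly containing J; consequently μ(A(φ,I)) = μ(I) − Σ_{J ∈ S_φ, J* = I} μ(J). -/

import Mathlib

open MeasureTheory Set Filter
open scoped ENNReal

/-- A tree `𝒯` on a probability space `(X, μ)` in the sense of Melas:
`X ∈ 𝒯`; every `I ∈ 𝒯` is measurable with `μ(I) > 0`; each `I ∈ 𝒯` has a finite or
countable family `C(I) ⊆ 𝒯` of at least two pairwise disjoint elements with union `I`;
`𝒯` is the union of its generations `𝒯_(m)`; and `sup_{I ∈ 𝒯_(m)} μ(I) → 0`. -/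
structure DyadicTree {X : Type*} [MeasurableSpace X] (μ : Measure X) where
  mem : Set (Set X)
  univ_mem : Set.univ ∈ mem
  meas : ∀ I ∈ mem, MeasurableSet I
  measure_pos : ∀ I ∈ mem, 0 < μ I
  C : Set X → Set (Set X)
  C_subset_mem : ∀ I ∈ mem, C I ⊆ mem
  C_countable : ∀ I ∈ mem, (C I).Countable
  C_nontrivial : ∀ I ∈ mem, ∃ J ∈ C I, ∃ K ∈ C I, J ≠ K
  C_disjoint : ∀ I ∈ mem, (C I).Pairwise Disjoint
  C_union : ∀ I ∈ mem, ⋃₀ C I = I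
  gen : ℕ → Set (Set X)
  gen_zero : gen 0 = {Set.univ}
  gen_succ : ∀ m, gen (m + 1) = ⋃ I ∈ gen m, C I
  mem_eq : mem = ⋃ m, gen m
  sup_measure_tendsto : Tendsto (fun m => ⨆ I ∈ gen m, μ I) atTop (nhds 0)

variable {X : Type*} [MeasurableSpace X]

/-- The average `Av_I(φ) = (1/μ(I)) ∫_I φ dμ`. -/
noncomputable def Av (μ : Measure X) (I : Set X) (φ : X → ℝ≥0∞) : ℝ≥0∞ :=
  (∫⁻ y in I, φ y ∂μ) / μ I

/-- The dyadic-like maximal operator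
`M_𝒯 φ(x) = sup { (1/μ(I)) ∫_I φ dμ : x ∈ I ∈ 𝒯 }`. -/
noncomputable def maxOp {μ : Measure X} (T : DyadicTree μ) (φ : X → ℝ≥0∞) (x : X) : ℝ≥0∞ :=
  ⨆ I ∈ T.mem, ⨆ _ : x ∈ I, Av μ I φ

variable {μ : Measure X}

/-- The exceptional set `𝒜_φ = {x : M_𝒯φ(x) > Av_I(φ) for all I ∈ 𝒯 with x ∈ I}`. -/
def badSet (T : DyadicTree μ) (φ : X → ℝ≥0∞) : Set X :=
  {x | ∀ I ∈ T.mem, x ∈ I → Av μ I φ < maxOp T φ x}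

/-- `φ` is `𝒯`-good if the set `𝒜_φ` has `μ`-measure zero. -/
def TGood (T : DyadicTree μ) (φ : X → ℝ≥0∞) : Prop :=
  μ (badSet T φ) = 0

/-- The set `A(φ, I) = {x ∈ X ∖ 𝒜_φ : I_φ(x) = I}`, where `I_φ(x)` is the largest
`I ∈ 𝒯` with `x ∈ I` and `M_𝒯φ(x) = Av_I(φ)`. -/
def ASet (T : DyadicTree μ) (φ : X → ℝ≥0∞) (I : Set X) : Set X :=
  {x | x ∉ badSet T φ ∧ x ∈ I ∧ maxOp T φ x = Av μ I φ ∧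
    ∀ J ∈ T.mem, x ∈ J → maxOp T φ x = Av μ J φ → J ⊆ I}

/-- The subtree `S_φ = {I ∈ 𝒯 : μ(A(φ,I)) > 0} ∪ {X}`. -/
def Sphi (T : DyadicTree μ) (φ : X → ℝ≥0∞) : Set (Set X) :=
  {I ∈ T.mem | 0 < μ (ASet T φ I)} ∪ {Set.univ}

/-- For `J ∈ S_φ`, `J* = I` means `I` is the smallest element of `S_φ` properly
containing `J`. -/
def isStar (T : DyadicTree μ) (φ : X → ℝ≥0∞) (J I : Set X) : Prop :=
  I ∈ Sphi T φ ∧ J ⊂ I ∧ ∀ K ∈ Sphi T φ, J ⊂ K → I ⊆ K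

-- ### auxiliary lemmas ###


lemma gen_subset_mem (T : DyadicTree μ) (m : ℕ) : T.gen m ⊆ T.mem := by
  rw [T.mem_eq]; exact subset_iUnion T.gen m

lemma mem_nonempty (T : DyadicTree μ) {I : Set X} (hI : I ∈ T.mem) : I.Nonempty :=
  nonempty_of_measure_ne_zero (T.measure_pos I hI).ne'

lemma child_subset (T : DyadicTree μ) {I J : Set X} (hI : I ∈ T.mem) (hJ : J ∈ T.C I) :
    J ⊆ I := by
  rw [← T.C_union I hI]; exact subset_sUnion_of_mem hJ

lemma gen_countable (T : DyadicTree μ) : ∀ m, (T.gen m).Countable := by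
  intro m
  induction m with
  | zero => rw [T.gen_zero]; exact countable_singleton _
  | succ m ih =>
    rw [T.gen_succ]
    exact ih.biUnion (fun I hI => T.C_countable I (gen_subset_mem T m hI))

lemma mem_countable (T : DyadicTree μ) : T.mem.Countable := by
  rw [T.mem_eq]; exact countable_iUnion (gen_countable T)

lemma gen_eq_or_disjoint (T : DyadicTree μ) :
    ∀ m, ∀ I ∈ T.gen m, ∀ J ∈ T.gen m, I = J ∨ Disjoint I J := by
  intro m
  induction m with
  | zero =>
    intro I hI J hJ
    rw [T.gen_zero] at hI hJ
    simp only [mem_singleton_iff] at hI hJ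
    left; rw [hI, hJ]
  | succ m ih =>
    intro I hI J hJ
    rw [T.gen_succ] at hI hJ
    simp only [mem_iUnion, exists_prop] at hI hJ
    obtain ⟨P, hP, hIP⟩ := hI
    obtain ⟨Q, hQ, hJQ⟩ := hJ
    rcases ih P hP Q hQ with h | h
    · subst h
      rcases eq_or_ne I J with h' | h'
      · exact Or.inl h'
      · exact Or.inr (T.C_disjoint P (gen_subset_mem T m hP) hIP hJQ h')
    · exact Or.inr <| h.mono (child_subset T (gen_subset_mem T m hP) hIP)
        (child_subset T (gen_subset_mem T m hQ) hJQ)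

lemma gen_nested (T : DyadicTree μ) :
    ∀ k m, ∀ I ∈ T.gen m, ∀ J ∈ T.gen (m + k), J ⊆ I ∨ Disjoint I J := by
  intro k
  induction k with
  | zero =>
    intro m I hI J hJ
    rcases gen_eq_or_disjoint T m I hI J hJ with h | h
    · exact Or.inl h.superset
    · exact Or.inr h
  | succ k ih =>
    intro m I hI J hJ
    rw [show m + (k+1) = (m + k) + 1 from rfl, T.gen_succ] at hJ
    simp only [mem_iUnion, exists_prop] at hJ
    obtain ⟨P, hP, hJP⟩ := hJ
    have hJsub : J ⊆ P := child_subset T (gen_subset_mem T _ hP) hJP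
    rcases ih m I hI P hP with h | h
    · exact Or.inl (hJsub.trans h)
    · exact Or.inr (h.mono_right hJsub)

lemma gen_nested' (T : DyadicTree μ) {m n : ℕ} (hmn : m ≤ n) {I J : Set X}
    (hI : I ∈ T.gen m) (hJ : J ∈ T.gen n) {x : X} (hxI : x ∈ I) (hxJ : x ∈ J) : J ⊆ I := by
  obtain ⟨k, rfl⟩ := Nat.exists_eq_add_of_le hmn
  rcases gen_nested T k m I hI J hJ with h | h
  · exact h
  · exact (disjoint_left.mp h hxI hxJ).elim

lemma mem_nested (T : DyadicTree μ) {I J : Set X} (hI : I ∈ T.mem) (hJ : J ∈ T.mem)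
    {x : X} (hxI : x ∈ I) (hxJ : x ∈ J) : I ⊆ J ∨ J ⊆ I := by
  rw [T.mem_eq] at hI hJ
  simp only [mem_iUnion] at hI hJ
  obtain ⟨m, hI⟩ := hI
  obtain ⟨n, hJ⟩ := hJ
  rcases le_total m n with h | h
  · exact Or.inr (gen_nested' T h hI hJ hxI hxJ)
  · exact Or.inl (gen_nested' T h hJ hI hxJ hxI)

lemma Av_le_maxOp {T : DyadicTree μ} {φ : X → ℝ≥0∞} {I : Set X} {x : X}
    (hI : I ∈ T.mem) (hx : x ∈ I) : Av μ I φ ≤ maxOp T φ x :=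
  le_iSup₂_of_le I hI (le_iSup_of_le hx le_rfl)

lemma Sphi_subset_mem {T : DyadicTree μ} {φ : X → ℝ≥0∞} : Sphi T φ ⊆ T.mem := by
  rintro I (⟨h, _⟩ | h)
  · exact h
  · simp only [mem_singleton_iff] at h; exact h ▸ T.univ_mem

lemma Sphi_nonempty_ASet {T : DyadicTree μ} {φ : X → ℝ≥0∞} {J : Set X}
    (hJ : J ∈ Sphi T φ) (hne : J ≠ Set.univ) : (ASet T φ J).Nonempty := by
  rcases hJ with ⟨_, h⟩ | h
  · exact nonempty_of_measure_ne_zero h.ne'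
  · simp only [mem_singleton_iff] at h; exact absurd h hne

/-- Key comparison: if `J ⊊ I` are tree sets, `A(φ,J)` is nonempty and `x ∈ A(φ,I)`,
then `x ∉ J`. -/
lemma ASet_not_mem {T : DyadicTree μ} {φ : X → ℝ≥0∞} {I J : Set X} {x y : X}
    (hI : I ∈ T.mem) (hJ : J ∈ T.mem) (hJI : J ⊂ I)
    (hy : y ∈ ASet T φ J) (hx : x ∈ ASet T φ I) : x ∉ J := by
  intro hxJ
  obtain ⟨_, hyJ, hymax, hymaxl⟩ := hy
  obtain ⟨_, _, hxmax, _⟩ := hx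
  have h1 : Av μ J φ ≤ Av μ I φ := hxmax ▸ Av_le_maxOp hJ hxJ
  have h2 : Av μ I φ ≤ Av μ J φ := hymax ▸ Av_le_maxOp hI (hJI.1 hyJ)
  have heq : maxOp T φ y = Av μ I φ := hymax.trans (le_antisymm h2 h1).symm
  exact hJI.2 (hymaxl I hI (hJI.1 hyJ) heq)

/-- For `x` outside the bad set there is a (largest) `K` with `x ∈ A(φ,K)`. -/
lemma exists_ASet {T : DyadicTree μ} {φ : X → ℝ≥0∞} {x : X} (hx : x ∉ badSet T φ) :
    ∃ K ∈ T.mem, x ∈ ASet T φ K := by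
  classical
  have hmemgen : ∀ K ∈ T.mem, ∃ m, K ∈ T.gen m := by
    intro K hK; rw [T.mem_eq] at hK; simpa using hK
  have hP : ∃ m, ∃ K ∈ T.gen m, x ∈ K ∧ maxOp T φ x = Av μ K φ := by
    simp only [badSet, mem_setOf_eq, not_forall] at hx
    obtain ⟨K, hK, hxK, hlt⟩ := hx
    obtain ⟨m, hm⟩ := hmemgen K hK
    exact ⟨m, K, hm, hxK, le_antisymm (not_lt.mp hlt) (Av_le_maxOp hK hxK)⟩
  obtain ⟨K, hKg, hxK, hmax⟩ := Nat.find_spec hP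
  refine ⟨K, gen_subset_mem T _ hKg, hx, hxK, hmax, ?_⟩
  intro J hJ hxJ hmaxJ
  obtain ⟨n, hn⟩ := hmemgen J hJ
  have hle : Nat.find hP ≤ n := Nat.find_min' hP ⟨J, hn, hxJ, hmaxJ⟩
  exact gen_nested' T hle hKg hn hxK hxJ

/-- Existence of `J` with `J* = I` above a given `K ∈ S_φ` with `K ⊊ I`. -/
lemma exists_isStar {T : DyadicTree μ} {φ : X → ℝ≥0∞} {I K : Set X}
    (hI : I ∈ Sphi T φ) (hK : K ∈ Sphi T φ) (hKI : K ⊂ I) :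
    ∃ J ∈ Sphi T φ, isStar T φ J I ∧ K ⊆ J := by
  classical
  have hmemgen : ∀ L ∈ T.mem, ∃ m, L ∈ T.gen m := by
    intro L hL; rw [T.mem_eq] at hL; simpa using hL
  obtain ⟨x, hxK⟩ := mem_nonempty T (Sphi_subset_mem hK)
  have hP : ∃ m, ∃ L ∈ T.gen m, L ∈ Sphi T φ ∧ K ⊆ L ∧ L ⊂ I := by
    obtain ⟨m, hm⟩ := hmemgen K (Sphi_subset_mem hK)
    exact ⟨m, K, hm, hK, subset_rfl, hKI⟩
  obtain ⟨J, hJg, hJS, hKJ, hJI⟩ := Nat.find_spec hP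
  -- J is the maximum of the family
  have hmaxJ : ∀ L ∈ Sphi T φ, K ⊆ L → L ⊂ I → L ⊆ J := by
    intro L hLS hKL hLI
    obtain ⟨n, hn⟩ := hmemgen L (Sphi_subset_mem hLS)
    have hle : Nat.find hP ≤ n := Nat.find_min' hP ⟨L, hn, hLS, hKL, hLI⟩
    exact gen_nested' T hle hJg hn (hKJ hxK) (hKL hxK)
  refine ⟨J, hJS, ⟨hI, hJI, ?_⟩, hKJ⟩
  intro K' hK'S hJK'
  rcases mem_nested T (Sphi_subset_mem hK'S) (Sphi_subset_mem hI)
    (hJK'.1 (hKJ hxK)) (hJI.1 (hKJ hxK)) with h | h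
  · rcases eq_or_ne K' I with h' | h'
    · exact h'.symm.subset
    · exact absurd (hmaxJ K' hK'S (hKJ.trans hJK'.1) ⟨h, fun hIK' => h' (le_antisymm h hIK')⟩)
        hJK'.2
  · exact h

/-- Lemma 3.2 iv): for `φ` `𝒯`-good and `I ∈ S_φ`,
`A(φ,I) = I ∖ ⋃ {J ∈ S_φ : J* = I}` up to a null set, so
`μ(A(φ,I)) = μ(I) − Σ_{J ∈ S_φ, J* = I} μ(J)`. -/
theorem ASet_eq_diff (μ : Measure X) [IsProbabilityMeasure μ] [NullSingletonClass μ]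
    (T : DyadicTree μ) (φ : X → ℝ≥0∞) (hφ : Measurable φ)
    (hint : ∫⁻ y, φ y ∂μ ≠ ∞) (hgood : TGood T φ)
    (I : Set X) (hI : I ∈ Sphi T φ) :
    μ (ASet T φ I \ (I \ ⋃ J ∈ {J ∈ Sphi T φ | isStar T φ J I}, J)) = 0 ∧
    μ ((I \ ⋃ J ∈ {J ∈ Sphi T φ | isStar T φ J I}, J) \ ASet T φ I) = 0 ∧
    μ (ASet T φ I) = μ I - ∑' J : {J ∈ Sphi T φ | isStar T φ J I}, μ (J : Set X) := by
  classical
  set fam := {J ∈ Sphi T φ | isStar T φ J I} with hfam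
  set U := ⋃ J ∈ fam, J with hU
  have hImem : I ∈ T.mem := Sphi_subset_mem hI
  have hfamne : ∀ J ∈ fam, (ASet T φ J).Nonempty := by
    intro J hJ
    refine Sphi_nonempty_ASet hJ.1 (fun he => ?_)
    exact hJ.2.2.1.2 (he ▸ subset_univ I)
  have h1 : ASet T φ I \ (I \ U) = ∅ := by
    rw [eq_empty_iff_forall_notMem]
    rintro x ⟨hxA, hxn⟩
    have hxI : x ∈ I := hxA.2.1
    have hxU : x ∈ U := by
      by_contra h; exact hxn ⟨hxI, h⟩
    simp only [hU, mem_iUnion, exists_prop] at hxU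
    obtain ⟨J, hJf, hxJ⟩ := hxU
    obtain ⟨y, hy⟩ := hfamne J hJf
    exact ASet_not_mem hImem (Sphi_subset_mem hJf.1) hJf.2.2.1 hy hxA hxJ
  -- null set for part 2
  have hNnull : μ (badSet T φ ∪ ⋃ K ∈ {K ∈ T.mem | μ (ASet T φ K) = 0}, ASet T φ K) = 0 := by
    apply measure_union_null hgood
    rw [measure_biUnion_null_iff ((mem_countable T).mono (sep_subset _ _))]
    exact fun K hK => hK.2
  -- Part 2 : inclusion into the null set
  have h2 : (I \ U) \ ASet T φ I ⊆
      badSet T φ ∪ ⋃ K ∈ {K ∈ T.mem | μ (ASet T φ K) = 0}, ASet T φ K := by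
    rintro x ⟨⟨hxI, hxU⟩, hxA⟩
    by_contra hN
    rw [mem_union, not_or] at hN
    obtain ⟨hxb, hxu⟩ := hN
    obtain ⟨K, hKm, hxK⟩ := exists_ASet hxb
    have hKpos : 0 < μ (ASet T φ K) := by
      rcases eq_or_ne (μ (ASet T φ K)) 0 with h | h
      · exact absurd (mem_biUnion (show K ∈ {K ∈ T.mem | μ (ASet T φ K) = 0} from ⟨hKm, h⟩)
          hxK) hxu
      · exact pos_iff_ne_zero.mpr h
    have hKS : K ∈ Sphi T φ := Or.inl ⟨hKm, hKpos⟩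
    have hKI : K ≠ I := fun h => hxA (h ▸ hxK)
    rcases mem_nested T hKm hImem hxK.2.1 hxI with h | h
    · -- K ⊆ I, hence K ⊊ I, find a star J above K
      obtain ⟨J, hJS, hJstar, hKJ⟩ :=
        exists_isStar hI hKS ⟨h, fun h' => hKI (le_antisymm h h')⟩
      exact hxU (mem_biUnion (show J ∈ fam from ⟨hJS, hJstar⟩) (hKJ hxK.2.1))
    · -- I ⊊ K : contradiction with the key comparison lemma
      have hIK : I ⊂ K := ⟨h, fun h' => hKI (le_antisymm h' h)⟩
      obtain ⟨y, hy⟩ := Sphi_nonempty_ASet hI (fun he => hIK.2 (he ▸ subset_univ K))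
      exact ASet_not_mem hKm hImem hIK hy hxK hxI
  -- Part 3
  have hcnt : fam.Countable := (mem_countable T).mono (fun J hJ => Sphi_subset_mem hJ.1)
  have hmeasU : MeasurableSet U :=
    MeasurableSet.biUnion hcnt (fun J hJ => T.meas J (Sphi_subset_mem hJ.1))
  have hUsub : U ⊆ I := iUnion₂_subset (fun J hJ => hJ.2.2.1.1)
  have hpd : fam.PairwiseDisjoint id := by
    intro J1 h1' J2 h2' hne
    simp only [Function.onFun, id]
    by_contra hd
    rw [Set.not_disjoint_iff] at hd
    obtain ⟨z, hz1, hz2⟩ := hd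
    rcases mem_nested T (Sphi_subset_mem h1'.1) (Sphi_subset_mem h2'.1) hz1 hz2 with h | h
    · exact h2'.2.2.1.2 (h1'.2.2.2 J2 h2'.1 ⟨h, fun h' => hne (le_antisymm h h')⟩)
    · exact h1'.2.2.1.2 (h2'.2.2.2 J1 h1'.1 ⟨h, fun h' => hne.symm (le_antisymm h h')⟩)
  have key : μ U = ∑' J : fam, μ (J : Set X) :=
    measure_biUnion hcnt hpd (fun J hJ => T.meas J (Sphi_subset_mem hJ.1))
  have hAeq : μ (ASet T φ I) = μ (I \ U) :=
    measure_congr (ae_eq_set.mpr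
      ⟨by rw [h1]; exact measure_empty, measure_mono_null h2 hNnull⟩)
  refine ⟨by rw [h1]; exact measure_empty, measure_mono_null h2 hNnull, ?_⟩
  rw [hAeq, measure_diff hUsub hmeasU.nullMeasurableSet (measure_ne_top μ U), key]
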